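/- Let f : {(a,b) ∈ [0,1]² : a ≤ b} → ℝ be continuous with f(a,a) = 0 for all a, and suppose that for every prime p and every continuous ψ₀ : {(a,b) : a ≤ b} × [-1,1] → ℝ with ψ₀((a,a),y) = y, negative on the bottom and positive on the top, there exists a continuous ψ₁ with the same boundary properties such that ψ₁(I,y) = 0 implies I admits a partition into p possibly degenerate subsegments I₁,…,I_p with ψ₀(Iⱼ,y) = 0 for all j. Then for every positive integer m, the segment [0,1] can be partitioned into m possibly degenerate subsegments with equal f-values. -/
import Mathlib

open Set

lemma concat_aux (P : ℝ → ℝ → Prop) (k : ℕ) (hk : 0 < k) :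
    ∀ (p : ℕ) (a b : ℝ) (x : ℕ → ℝ), x 0 = a → x p = b →
    ∀ z : ℕ → ℕ → ℝ, (∀ i < p, z i 0 = x i) → (∀ i < p, z i k = x (i + 1)) →
    (∀ i < p, ∀ j < k, z i j ≤ z i (j + 1)) →
    (∀ i < p, ∀ j < k, P (z i j) (z i (j + 1))) →
    ∃ w : ℕ → ℝ, w 0 = a ∧ w (p * k) = b ∧ (∀ i < p * k, w i ≤ w (i + 1)) ∧
      ∀ i < p * k, P (w i) (w (i + 1)) := by
  intro p
  induction p with
  | zero =>
    intro a b x hx0 hxp z _ _ _ _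
    exact ⟨fun _ => a, rfl, by rw [← hx0, ← hxp], by simp, by simp⟩
  | succ p ih =>
    intro a b x hx0 hxp z hz0 hzk hzm hzP
    obtain ⟨w, hw0, hwN, hwm, hwP⟩ := ih a (x p) x hx0 rfl z
      (fun i hi => hz0 i (by omega)) (fun i hi => hzk i (by omega))
      (fun i hi => hzm i (by omega)) (fun i hi => hzP i (by omega))
    have hsucc : (p + 1) * k = p * k + k := Nat.succ_mul p k
    rw [hsucc]
    have hWeq : ∀ n ≤ p * k, (if n < p * k then w n else z p (n - p * k)) = w n := by
      intro n hn
      by_cases h : n < p * k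
      · rw [if_pos h]
      · rw [if_neg h]
        have hn' : n = p * k := by omega
        subst hn'
        rw [Nat.sub_self, hz0 p (by omega)]
        exact hwN.symm
    refine ⟨fun n => if n < p * k then w n else z p (n - p * k), ?_, ?_, ?_, ?_⟩
    · show (if 0 < p * k then w 0 else z p (0 - p * k)) = a
      by_cases h : 0 < p * k
      · rw [if_pos h]; exact hw0
      · rw [if_neg h]
        have hp : p = 0 := by
          have hpk0 : p * k = 0 := by omega
          rcases Nat.mul_eq_zero.mp hpk0 with h' | h'
          · exact h'
          · omega
        subst hp
        rw [Nat.zero_mul, Nat.sub_self, hz0 0 (by omega)]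
        exact hx0
    · show (if p * k + k < p * k then w (p * k + k) else z p (p * k + k - p * k)) = b
      rw [if_neg (by omega), show p * k + k - p * k = k by omega, hzk p (by omega)]
      exact hxp
    · intro i hi
      show (if i < p * k then w i else z p (i - p * k)) ≤
        (if i + 1 < p * k then w (i + 1) else z p (i + 1 - p * k))
      by_cases h : i + 1 ≤ p * k
      · rw [hWeq i (by omega), hWeq (i + 1) h]
        exact hwm i (by omega)
      · rw [if_neg (by omega), if_neg (by omega), show i + 1 - p * k = (i - p * k) + 1 by omega]
        exact hzm p (by omega) (i - p * k) (by omega)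
    · intro i hi
      show P (if i < p * k then w i else z p (i - p * k))
        (if i + 1 < p * k then w (i + 1) else z p (i + 1 - p * k))
      by_cases h : i + 1 ≤ p * k
      · rw [hWeq i (by omega), hWeq (i + 1) h]
        exact hwP i (by omega)
      · rw [if_neg (by omega), if_neg (by omega), show i + 1 - p * k = (i - p * k) + 1 by omega]
        exact hzP p (by omega) (i - p * k) (by omega)


theorem stmt_11 (f : ℝ × ℝ → ℝ)
    (hf : ContinuousOn f {q : ℝ × ℝ | 0 ≤ q.1 ∧ q.1 ≤ q.2 ∧ q.2 ≤ 1})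
    (hdeg : ∀ a ∈ Icc (0:ℝ) 1, f (a, a) = 0)
    (key : ∀ p : ℕ, p.Prime → ∀ ψ₀ : (ℝ × ℝ) × ℝ → ℝ,
      ContinuousOn ψ₀ ({q : ℝ × ℝ | 0 ≤ q.1 ∧ q.1 ≤ q.2 ∧ q.2 ≤ 1} ×ˢ Icc (-1:ℝ) 1) →
      (∀ a ∈ Icc (0:ℝ) 1, ∀ y ∈ Icc (-1:ℝ) 1, ψ₀ ((a, a), y) = y) →
      (∀ q : ℝ × ℝ, 0 ≤ q.1 → q.1 ≤ q.2 → q.2 ≤ 1 → ψ₀ (q, -1) < 0 ∧ 0 < ψ₀ (q, 1)) →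
      ∃ ψ₁ : (ℝ × ℝ) × ℝ → ℝ,
        ContinuousOn ψ₁ ({q : ℝ × ℝ | 0 ≤ q.1 ∧ q.1 ≤ q.2 ∧ q.2 ≤ 1} ×ˢ Icc (-1:ℝ) 1) ∧
        (∀ a ∈ Icc (0:ℝ) 1, ∀ y ∈ Icc (-1:ℝ) 1, ψ₁ ((a, a), y) = y) ∧
        (∀ q : ℝ × ℝ, 0 ≤ q.1 → q.1 ≤ q.2 → q.2 ≤ 1 → ψ₁ (q, -1) < 0 ∧ 0 < ψ₁ (q, 1)) ∧
        ∀ q : ℝ × ℝ, 0 ≤ q.1 → q.1 ≤ q.2 → q.2 ≤ 1 → ∀ y ∈ Icc (-1:ℝ) 1,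
          ψ₁ (q, y) = 0 →
          ∃ x : ℕ → ℝ, x 0 = q.1 ∧ x p = q.2 ∧ (∀ i < p, x i ≤ x (i + 1)) ∧
            ∀ i < p, ψ₀ ((x i, x (i + 1)), y) = 0)
    (m : ℕ) (hm : 0 < m) :
    ∃ x : ℕ → ℝ, x 0 = 0 ∧ x m = 1 ∧ (∀ i < m, x i ≤ x (i + 1)) ∧
      ∀ i < m, ∀ j < m, f (x i, x (i + 1)) = f (x j, x (j + 1)) := by
  -- The domain is compact
  have hScl : IsClosed {q : ℝ × ℝ | 0 ≤ q.1 ∧ q.1 ≤ q.2 ∧ q.2 ≤ 1} :=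
    IsClosed.inter (isClosed_le continuous_const continuous_fst)
      (IsClosed.inter (isClosed_le continuous_fst continuous_snd)
        (isClosed_le continuous_snd continuous_const))
  have hScomp : IsCompact {q : ℝ × ℝ | 0 ≤ q.1 ∧ q.1 ≤ q.2 ∧ q.2 ≤ 1} := by
    apply (isCompact_Icc (a := ((0:ℝ), (0:ℝ))) (b := ((1:ℝ), (1:ℝ)))).of_isClosed_subset hScl
    intro q hq
    obtain ⟨h1, h2, h3⟩ := hq
    constructor
    · exact ⟨h1, h1.trans h2⟩
    · exact ⟨h2.trans h3, h3⟩
  obtain ⟨C, hC⟩ := hScomp.exists_bound_of_continuousOn hf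
  set c : ℝ := 1 / (max C 0 + 1) with hc_def
  have hMpos : (0:ℝ) < max C 0 + 1 := by positivity
  have hc : 0 < c := by positivity
  have hbound : ∀ q : ℝ × ℝ, 0 ≤ q.1 → q.1 ≤ q.2 → q.2 ≤ 1 → |c * f q| < 1 := by
    intro q h1 h2 h3
    have hfq : |f q| ≤ max C 0 := le_trans (hC q ⟨h1, h2, h3⟩) (le_max_left _ _)
    rw [abs_mul, abs_of_pos hc]
    calc c * |f q| ≤ c * max C 0 := by nlinarith
      _ < c * (max C 0 + 1) := by nlinarith
      _ = 1 := by rw [hc_def, one_div, inv_mul_cancel₀ (ne_of_gt hMpos)]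
  -- The base function
  set φ : (ℝ × ℝ) × ℝ → ℝ := fun z => z.2 - c * f z.1 with hφ_def
  have hφcont : ContinuousOn φ
      ({q : ℝ × ℝ | 0 ≤ q.1 ∧ q.1 ≤ q.2 ∧ q.2 ≤ 1} ×ˢ Icc (-1:ℝ) 1) := by
    apply ContinuousOn.sub continuous_snd.continuousOn
    exact continuousOn_const.mul (hf.comp continuous_fst.continuousOn (fun z hz => hz.1))
  have hφdiag : ∀ a ∈ Icc (0:ℝ) 1, ∀ y ∈ Icc (-1:ℝ) 1, φ ((a, a), y) = y := by
    intro a ha y _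
    simp [hφ_def, hdeg a ha]
  have hφsign : ∀ q : ℝ × ℝ, 0 ≤ q.1 → q.1 ≤ q.2 → q.2 ≤ 1 → φ (q, -1) < 0 ∧ 0 < φ (q, 1) := by
    intro q h1 h2 h3
    have := hbound q h1 h2 h3
    rw [abs_lt] at this
    constructor
    · show -1 - c * f q < 0; linarith [this.1, this.2]
    · show 0 < 1 - c * f q; linarith [this.2]
  -- Main induction: for every n > 0 there is a ψ whose zeros give n-partitions with equal f
  have main : ∀ n : ℕ, 0 < n → ∃ ψ : (ℝ × ℝ) × ℝ → ℝ,
      ContinuousOn ψ ({q : ℝ × ℝ | 0 ≤ q.1 ∧ q.1 ≤ q.2 ∧ q.2 ≤ 1} ×ˢ Icc (-1:ℝ) 1) ∧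
      (∀ a ∈ Icc (0:ℝ) 1, ∀ y ∈ Icc (-1:ℝ) 1, ψ ((a, a), y) = y) ∧
      (∀ q : ℝ × ℝ, 0 ≤ q.1 → q.1 ≤ q.2 → q.2 ≤ 1 → ψ (q, -1) < 0 ∧ 0 < ψ (q, 1)) ∧
      ∀ q : ℝ × ℝ, 0 ≤ q.1 → q.1 ≤ q.2 → q.2 ≤ 1 → ∀ y ∈ Icc (-1:ℝ) 1,
        ψ (q, y) = 0 →
        ∃ x : ℕ → ℝ, x 0 = q.1 ∧ x n = q.2 ∧ (∀ i < n, x i ≤ x (i + 1)) ∧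
          ∀ i < n, c * f (x i, x (i + 1)) = y := by
    intro n
    induction n using Nat.strong_induction_on with
    | _ n ih =>
      intro hn
      by_cases hn1 : n = 1
      · subst hn1
        refine ⟨φ, hφcont, hφdiag, hφsign, ?_⟩
        intro q h1 h2 h3 y hy hzero
        refine ⟨fun i => if i = 0 then q.1 else q.2, by simp, by simp, ?_, ?_⟩
        · intro i hi
          interval_cases i
          simpa using h2
        · intro i hi
          interval_cases i
          have hz : y - c * f (q.1, q.2) = 0 := hzero
          norm_num
          linarith
      · -- n ≥ 2 : split off a prime factor
        have hn2 : 2 ≤ n := by omega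
        set p := n.minFac with hp_def
        have hp : p.Prime := Nat.minFac_prime (by omega)
        set k := n / p with hk_def
        have hdvd : p ∣ n := Nat.minFac_dvd n
        have hpk : p * k = n := Nat.mul_div_cancel' hdvd
        have hk : 0 < k := Nat.div_pos (Nat.minFac_le hn) (Nat.minFac_pos n)
        have hkn : k < n := Nat.div_lt_self hn hp.one_lt
        obtain ⟨ψ, hψc, hψd, hψs, hψp⟩ := ih k hkn hk
        obtain ⟨ψ', hψ'c, hψ'd, hψ's, hψ'p⟩ := key p hp ψ hψc hψd hψs
        refine ⟨ψ', hψ'c, hψ'd, hψ's, ?_⟩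
        intro q h1 h2 h3 y hy hzero
        obtain ⟨x, hx0, hxp, hxm, hxz⟩ := hψ'p q h1 h2 h3 y hy hzero
        -- all partition points are in [q.1, q.2]
        have hchain : ∀ j ≤ p, ∀ i ≤ j, x i ≤ x j := by
          intro j hj
          induction j with
          | zero => intro i hi; interval_cases i; exact le_refl _
          | succ j IH =>
            intro i hi
            by_cases h : i ≤ j
            · exact (IH (by omega) i h).trans (hxm j (by omega))
            · have h' : i = j + 1 := by omega
              rw [h']
        have hlb : ∀ i ≤ p, 0 ≤ x i := by
          intro i hi
          have := hchain i hi 0 (by omega)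
          rw [hx0] at this
          linarith
        have hub : ∀ i ≤ p, x i ≤ 1 := by
          intro i hi
          have := hchain p le_rfl i hi
          rw [hxp] at this
          linarith
        -- subdivide each of the p blocks into k pieces
        have hblocks : ∀ i, i < p → ∃ xs : ℕ → ℝ, xs 0 = x i ∧ xs k = x (i + 1) ∧
            (∀ j < k, xs j ≤ xs (j + 1)) ∧ ∀ j < k, c * f (xs j, xs (j + 1)) = y := by
          intro i hi
          exact hψp (x i, x (i + 1)) (hlb i (by omega)) (hxm i hi) (hub (i + 1) (by omega))
            y hy (hxz i hi)
        choose! z hz0 hzk hzm hzf using hblocks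
        obtain ⟨w, hw0, hwN, hwm, hwf⟩ :=
          concat_aux (fun a b => c * f (a, b) = y) k hk p q.1 q.2 x hx0 hxp z hz0 hzk hzm hzf
        rw [hpk] at hwN hwm hwf
        exact ⟨w, hw0, hwN, hwm, hwf⟩
  -- Apply to the whole segment and use the intermediate value theorem
  obtain ⟨ψ, hψc, hψd, hψs, hψp⟩ := main m hm
  have hmem : ∀ y ∈ Icc (-1:ℝ) 1, ((((0:ℝ), (1:ℝ)), y) : (ℝ × ℝ) × ℝ) ∈
      ({q : ℝ × ℝ | 0 ≤ q.1 ∧ q.1 ≤ q.2 ∧ q.2 ≤ 1} ×ˢ Icc (-1:ℝ) 1) := by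
    intro y hy
    exact ⟨⟨le_refl 0, zero_le_one, le_refl 1⟩, hy⟩
  have hcont1 : ContinuousOn (fun y : ℝ => ψ (((0:ℝ), (1:ℝ)), y)) (Icc (-1:ℝ) 1) := by
    apply hψc.comp
    · exact (Continuous.prodMk continuous_const continuous_id).continuousOn
    · intro y hy; exact hmem y hy
  have hsign := hψs ((0:ℝ), (1:ℝ)) (le_refl 0) zero_le_one (le_refl 1)
  have hivt := intermediate_value_Icc (by norm_num : (-1:ℝ) ≤ 1) hcont1
  have h0mem : (0:ℝ) ∈ Icc (ψ (((0:ℝ), (1:ℝ)), -1)) (ψ (((0:ℝ), (1:ℝ)), 1)) :=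
    ⟨hsign.1.le, hsign.2.le⟩
  obtain ⟨y, hy, hy0⟩ := hivt h0mem
  obtain ⟨x, hx0, hxm, hxmono, hxf⟩ := hψp ((0:ℝ), (1:ℝ)) (le_refl 0) zero_le_one (le_refl 1) y hy hy0
  refine ⟨x, hx0, hxm, hxmono, ?_⟩
  intro i hi j hj
  have h1 := hxf i hi
  have h2 := hxf j hj
  have := h1.trans h2.symm
  exact mul_left_cancel₀ (ne_of_gt hc) this
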